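/- Every one-dimensional representation T of H_k contains exactly one one-dimensional representation of P_{2^k - 1} in its restriction to P_{2^k - 1}, where P_{2^k - 1} ≅ H_{k-1} × H_{k-2} × ... × H_0 is embedded in H_k. -/

import Mathlib

open scoped Classical

/-- The cyclic group of order 2, written multiplicatively. -/
abbrev C2 : Type := Multiplicative (ZMod 2)

/-- The automorphism of `G × G` swapping the two coordinates. -/
def swapAut (G : Type*) [Group G] : MulAut (G × G) :=
  (MulEquiv.prodComm : G × G ≃* G × G)

/-- The action of `C2` on `G × G` by swapping coordinates. -/
def swapHom (G : Type*) [Group G] : C2 →* MulAut (G × G) where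
  toFun x := if x = 1 then 1 else swapAut G
  map_one' := if_pos rfl
  map_mul' := by
    have key : ∀ a : C2, a = 1 ∨ a = Multiplicative.ofAdd 1 := by decide
    have hss : swapAut G * swapAut G = 1 := by
      apply MulEquiv.ext; intro x; exact Prod.ext rfl rfl
    intro x y
    rcases key x with hx | hx <;> rcases key y with hy | hy <;> subst hx <;> subst hy
    · simp
    · simp
    · simp
    · have h2 : (Multiplicative.ofAdd (1 : ZMod 2)) * Multiplicative.ofAdd 1 = 1 := by decide
      have hne : (Multiplicative.ofAdd (1 : ZMod 2)) ≠ 1 := by decide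
      rw [h2]
      simp [hne, hss]

/-- The wreath product `G ≀ C2`, i.e. the semidirect product `(G × G) ⋊ C2` with
`C2` acting by swapping the coordinates. -/
abbrev Wr (G : Type*) [Group G] : Type _ := (G × G) ⋊[swapHom G] C2

/-- Auxiliary construction: the tower of iterated wreath products, with its group
structure. -/
def HgrpAux : ℕ → Σ G : Type, Group G
  | 0 => ⟨PUnit, inferInstance⟩
  | k + 1 => ⟨@Wr (HgrpAux k).1 (HgrpAux k).2, by letI := (HgrpAux k).2; infer_instance⟩

/-- `Hgrp k` is the iterated wreath product `(⋯(1 ≀ C2) ≀ ⋯ ) ≀ C2`, a 2-Sylow subgroup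
of `S_{2^k}`: `Hgrp 0` is trivial and `Hgrp (k+1) = (Hgrp k) ≀ C2`. -/
abbrev Hgrp (k : ℕ) : Type := (HgrpAux k).1

instance instGroupHgrp (k : ℕ) : Group ((HgrpAux k).1) := (HgrpAux k).2

/-- `Pgrp k` is the 2-Sylow subgroup of `S_{2^k - 1}`, namely
`H_{k-1} × H_{k-2} × ⋯ × H_0`. -/
def Pgrp : ℕ → Type
  | 0 => PUnit
  | k + 1 => Hgrp k × Pgrp k

instance instGroupPgrp : ∀ k : ℕ, Group (Pgrp k)
  | 0 => inferInstanceAs (Group PUnit)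
  | k + 1 => letI := instGroupPgrp k; inferInstanceAs (Group (Hgrp k × Pgrp k))

/-- The standard embedding of `P_{2^k-1} = H_{k-1} × P_{2^{k-1}-1}` into
`H_k = H_{k-1} ≀ C2`, sending `(h, p)` to `(h, ι p)` inside the base subgroup
`H_{k-1} × H_{k-1}`. -/
def iota : (k : ℕ) → Pgrp k →* Hgrp k
  | 0 => 1
  | k + 1 => SemidirectProduct.inl.comp ((MonoidHom.id (Hgrp k)).prodMap (iota k))

/-- Every one-dimensional representation `T` of `H_k` contains exactly one
one-dimensional representation of `P_{2^k-1}` in its restriction along the embedding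
`ι : P_{2^k-1} → H_k` (a one-dimensional representation `S` occurs in the restriction
iff the character inner product `∑ g, S(g) * conj(T(ι g))` is nonzero). -/

noncomputable def hFin : ∀ k, Fintype (Hgrp k)
  | 0 => inferInstanceAs (Fintype PUnit)
  | k + 1 => by
    letI := hFin k
    exact Fintype.ofEquiv ((Hgrp k × Hgrp k) × C2)
      { toFun := fun p => ⟨p.1, p.2⟩
        invFun := fun w => (w.left, w.right)
        left_inv := fun p => rfl
        right_inv := fun w => rfl }

noncomputable def pFin : ∀ k, Fintype (Pgrp k)
  | 0 => inferInstanceAs (Fintype PUnit)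
  | k + 1 => by
    letI := hFin k; letI := pFin k
    exact inferInstanceAs (Fintype (Hgrp k × Pgrp k))

lemma conj_hom_eq_inv {G : Type*} [Group G] [Fintype G] (f : G →* ℂˣ) (g : G) :
    (starRingEnd ℂ) (f g : ℂ) = ((f g)⁻¹ : ℂˣ) := by
  have h1 : (f g : ℂ) ^ Fintype.card G = 1 := by
    rw [← Units.val_pow_eq_pow_val, ← map_pow, pow_card_eq_one, map_one, Units.val_one]
  have habs : ‖(f g : ℂ)‖ = 1 := by
    have h2 : ‖(f g : ℂ)‖ ^ Fintype.card G = 1 := by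
      rw [← norm_pow, h1, norm_one]
    have hc : Fintype.card G ≠ 0 := Fintype.card_ne_zero
    rcases (pow_eq_one_iff_cases).mp h2 with h | h | h
    · exact absurd h hc
    · exact h
    · have hnn := norm_nonneg ((f g : ℂ))
      rw [h.1] at hnn; linarith
  rw [← Complex.inv_eq_conj habs, Units.val_inv_eq_inv_val]

lemma sum_hom_ne_zero_iff {G : Type*} [Group G] [Fintype G] (f : G →* ℂˣ) :
    (∑ g, (f g : ℂ)) ≠ 0 ↔ f = 1 := by
  constructor
  · intro hs
    by_contra hf
    obtain ⟨h, hh⟩ : ∃ h, f h ≠ 1 := by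
      by_contra hc; push_neg at hc; exact hf (MonoidHom.ext fun x => hc x)
    have key : ∑ g, (f g : ℂ) = (f h : ℂ) * ∑ g, (f g : ℂ) := by
      rw [Finset.mul_sum]
      exact Fintype.sum_bijective (fun g => h⁻¹ * g) (Group.mulLeft_bijective h⁻¹) _ _
        (fun g => by rw [← Units.val_mul, ← map_mul, mul_inv_cancel_left])
    have h2 : ((f h : ℂ) - 1) * ∑ g, (f g : ℂ) = 0 := by
      rw [sub_mul, one_mul, ← key, sub_self]
    rcases mul_eq_zero.mp h2 with h3 | h3
    · exact hh (Units.ext (by simpa using sub_eq_zero.mp h3))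
    · exact hs h3
  · intro hf; subst hf
    simp only [MonoidHom.one_apply, Units.val_one, Finset.sum_const, Finset.card_univ,
      nsmul_eq_mul, mul_one]
    exact_mod_cast (Nat.cast_ne_zero (R := ℂ)).mpr Fintype.card_ne_zero

theorem one_dim_restriction_unique (k : ℕ) (T : Hgrp k →* ℂˣ) :
    ∃! S : Pgrp k →* ℂˣ,
      (∑ᶠ g : Pgrp k, (S g : ℂ) * (starRingEnd ℂ) ((T (iota k g) : ℂ))) ≠ 0 := by
  letI := pFin k
  refine ⟨T.comp (iota k), ?_, ?_⟩
  · simp only [finsum_eq_sum_of_fintype]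
    have he : ∀ g : Pgrp k, ((T.comp (iota k)) g : ℂ) *
        (starRingEnd ℂ) ((T (iota k g) : ℂ)) = 1 := fun g => by
      rw [show (T (iota k g)) = (T.comp (iota k)) g from rfl,
        conj_hom_eq_inv (T.comp (iota k)) g, ← Units.val_mul, mul_inv_cancel, Units.val_one]
    rw [Finset.sum_congr rfl (fun g _ => he g)]
    simp only [Finset.sum_const, Finset.card_univ, nsmul_eq_mul, mul_one]
    exact_mod_cast (Nat.cast_ne_zero (R := ℂ)).mpr Fintype.card_ne_zero
  · intro S hS
    rw [finsum_eq_sum_of_fintype] at hS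
    have he : ∀ g : Pgrp k, (S g : ℂ) * (starRingEnd ℂ) ((T (iota k g) : ℂ)) =
        ((S * (T.comp (iota k))⁻¹) g : ℂ) := fun g => by
      rw [show (T (iota k g)) = (T.comp (iota k)) g from rfl,
        conj_hom_eq_inv (T.comp (iota k)) g]
      simp [Units.val_mul]
    rw [Finset.sum_congr rfl (fun g _ => he g)] at hS
    have := (sum_hom_ne_zero_iff _).mp hS
    exact mul_inv_eq_one.mp this
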